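/- Define Λ(θ) = −∫_0^θ ln|2 sin t| dt and V(α, β) = Λ(α) + Λ(β) + Λ(π − α − β) on D = {(α, β) : α > 0, β > 0, α + β < π}. Then V attains its maximum on D at the unique point (α, β) = (π/3, π/3), i.e., the regular ideal tetrahedron maximizes volume among all ideal hyperbolic tetrahedra. -/

import Mathlib

open Real MeasureTheory Set Filter

noncomputable def lobachevsky (θ : ℝ) : ℝ := -∫ t in (0 : ℝ)..θ, Real.log |2 * Real.sin t|

noncomputable def idealVol (p : ℝ × ℝ) : ℝ :=
  lobachevsky p.1 + lobachevsky p.2 + lobachevsky (π - p.1 - p.2)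

def angleTriangle : Set (ℝ × ℝ) := {p | 0 < p.1 ∧ 0 < p.2 ∧ p.1 + p.2 < π}

/-- `log` is integrable on `(0, 1]`. -/
lemma integrableOn_log_Ioc01 : IntegrableOn Real.log (Set.Ioc (0:ℝ) 1) := by
  have key : ∀ n : ℕ, IntegrableOn Real.log (Set.Ioc (((n:ℝ)+1)⁻¹) 1) := by
    intro n
    have hpos : (0:ℝ) < ((n:ℝ)+1)⁻¹ := by positivity
    have : ContinuousOn Real.log (Set.Icc (((n:ℝ)+1)⁻¹) 1) :=
      Real.continuousOn_log.mono (fun t ht => by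
        simp only [Set.mem_compl_iff, Set.mem_singleton_iff]
        exact ne_of_gt (lt_of_lt_of_le hpos ht.1))
    exact (this.integrableOn_Icc).mono_set Set.Ioc_subset_Icc_self
  apply MeasureTheory.integrableOn_Ioc_of_intervalIntegral_norm_bounded_left
    (l := atTop) (a := fun n : ℕ => ((n:ℝ)+1)⁻¹) (I := 1) key
  · have := tendsto_one_div_add_atTop_nhds_zero_nat (𝕜 := ℝ)
    simpa [one_div] using this
  · filter_upwards with n
    have hpos : (0:ℝ) < ((n:ℝ)+1)⁻¹ := by positivity
    have hle1 : ((n:ℝ)+1)⁻¹ ≤ 1 := by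
      rw [inv_le_one_iff₀]; right; linarith [Nat.cast_nonneg (α := ℝ) n]
    set ε := ((n:ℝ)+1)⁻¹ with hε
    have heq : ∀ t ∈ Set.Ioc ε 1, ‖Real.log t‖ = -Real.log t := by
      intro t ht
      rw [Real.norm_eq_abs, abs_of_nonpos (Real.log_nonpos (le_of_lt (lt_trans hpos ht.1)) ht.2)]
    rw [MeasureTheory.setIntegral_congr_fun measurableSet_Ioc heq]
    rw [← intervalIntegral.integral_of_le hle1]
    rw [intervalIntegral.integral_neg, integral_log]
    have hlog : Real.log ε ≤ 0 := Real.log_nonpos hpos.le hle1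
    have : ε * Real.log ε ≤ 0 := mul_nonpos_of_nonneg_of_nonpos hpos.le hlog
    simp only [Real.log_one]
    nlinarith

/-- `log` is integrable on `(0, b]` for any `b`. -/
lemma integrableOn_log_Ioc (b : ℝ) : IntegrableOn Real.log (Set.Ioc 0 b) := by
  have h2 : IntegrableOn Real.log (Set.Icc 1 (max 1 b)) := by
    apply ContinuousOn.integrableOn_Icc
    exact Real.continuousOn_log.mono (fun t ht => by
      simp only [Set.mem_compl_iff, Set.mem_singleton_iff]
      exact ne_of_gt (lt_of_lt_of_le one_pos ht.1))
  apply (integrableOn_log_Ioc01.union h2).mono_set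
  intro t ht
  rcases le_or_gt t 1 with h | h
  · exact Or.inl ⟨ht.1, h⟩
  · exact Or.inr ⟨h.le, le_max_of_le_right ht.2⟩

lemma intervalIntegrable_logsin {x : ℝ} (hx : 0 < x) (hx' : x < π) :
    IntervalIntegrable (fun t => Real.log |2 * Real.sin t|) volume 0 x := by
  rw [intervalIntegrable_iff_integrableOn_Ioc_of_le hx.le]
  set c : ℝ := Real.sin x / x with hc
  have hcpos : 0 < c := div_pos (Real.sin_pos_of_pos_of_lt_pi hx hx') hx
  set C : ℝ := |Real.log (2*c)| + |Real.log 2| with hC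
  have hmeas : AEStronglyMeasurable (fun t => Real.log |2 * Real.sin t|)
      (volume.restrict (Set.Ioc 0 x)) :=
    (Real.measurable_log.comp ((continuous_const.mul continuous_sin).measurable.abs)).aestronglyMeasurable
  have hg : IntegrableOn (fun t => ‖Real.log t‖ + C) (Set.Ioc 0 x) volume :=
    (integrableOn_log_Ioc x).norm.add (integrableOn_const measure_Ioc_lt_top.ne)
  apply Integrable.mono' hg hmeas
  filter_upwards [ae_restrict_mem measurableSet_Ioc] with t ht
  have htpos : 0 < t := ht.1
  have htπ : t < π := lt_of_le_of_lt ht.2 hx'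
  have hsin_pos : 0 < Real.sin t := Real.sin_pos_of_pos_of_lt_pi htpos htπ
  have habs : |2 * Real.sin t| = 2 * Real.sin t := abs_of_pos (by linarith)
  -- upper bound: sin t ≤ t
  have hub : Real.sin t ≤ t := le_of_lt (Real.sin_lt htpos)
  -- lower bound by concavity: sin t ≥ c * t
  have hlb : c * t ≤ Real.sin t := by
    have hcon := strictConcaveOn_sin_Icc.concaveOn
    have h0 : (0:ℝ) ∈ Set.Icc (0:ℝ) π := ⟨le_rfl, pi_pos.le⟩
    have hxm : x ∈ Set.Icc (0:ℝ) π := ⟨hx.le, hx'.le⟩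
    have ha : (0:ℝ) ≤ 1 - t / x := by
      have : t / x ≤ 1 := (div_le_one hx).2 ht.2
      linarith
    have hb : (0:ℝ) ≤ t / x := by positivity
    have hab : (1 - t/x) + t/x = 1 := by ring
    have := hcon.2 h0 hxm ha hb hab
    simp only [smul_eq_mul, mul_zero, Real.sin_zero, zero_add] at this
    have harg : t / x * x = t := div_mul_cancel₀ t (ne_of_gt hx)
    rw [harg] at this
    calc c * t = t / x * Real.sin x := by rw [hc]; ring
    _ ≤ Real.sin t := this
  have hl : Real.log (2*c) + Real.log t ≤ Real.log (2 * Real.sin t) := by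
    rw [← Real.log_mul (by positivity) (ne_of_gt htpos)]
    apply Real.log_le_log (by positivity)
    calc 2 * c * t = 2 * (c * t) := by ring
    _ ≤ 2 * Real.sin t := by linarith
  have hu : Real.log (2 * Real.sin t) ≤ Real.log 2 + Real.log t := by
    rw [← Real.log_mul two_ne_zero (ne_of_gt htpos)]
    exact Real.log_le_log (by positivity) (by linarith)
  rw [Real.norm_eq_abs, habs, abs_le]
  constructor
  · have h1 := neg_abs_le (Real.log (2*c))
    have h2 := neg_abs_le (Real.log t)
    rw [Real.norm_eq_abs]
    simp only [hC]
    nlinarith [abs_nonneg (Real.log 2)]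
  · have h1 := le_abs_self (Real.log 2)
    have h2 := le_abs_self (Real.log t)
    rw [Real.norm_eq_abs]
    simp only [hC]
    nlinarith [abs_nonneg (Real.log (2*c))]

lemma hasDerivAt_lobachevsky {x : ℝ} (hx : 0 < x) (hx' : x < π) :
    HasDerivAt lobachevsky (-Real.log (2 * Real.sin x)) x := by
  have hint := intervalIntegrable_logsin hx hx'
  have hsin : 0 < Real.sin x := Real.sin_pos_of_pos_of_lt_pi hx hx'
  have hcont : ContinuousAt (fun t => Real.log |2 * Real.sin t|) x := by
    apply Real.continuousAt_log ?_ |>.comp ((continuous_const.mul continuous_sin).abs.continuousAt)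
    simp only [ne_eq, abs_eq_zero]
    intro h
    simp only [Pi.mul_apply] at h
    nlinarith
  have hmeas : StronglyMeasurableAtFilter (fun t => Real.log |2 * Real.sin t|) (nhds x) :=
    (Real.measurable_log.comp
      ((continuous_const.mul continuous_sin).measurable.abs)).stronglyMeasurable.stronglyMeasurableAtFilter
  have h := (intervalIntegral.integral_hasDerivAt_right hint hmeas hcont).neg
  have habs : |2 * Real.sin x| = 2 * Real.sin x := abs_of_pos (by linarith)
  rw [habs] at h
  exact h

/-- Balancing two angles with fixed sum strictly increases the volume. -/
lemma balance_lt {a b : ℝ} (ha : 0 < a) (hab : a < b) (hs : a + b < π) :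
    lobachevsky a + lobachevsky b < 2 * lobachevsky ((a + b) / 2) := by
  set s := a + b with hsdef
  have hb : 0 < b := ha.trans hab
  have hs0 : 0 < s := by positivity
  set φ : ℝ → ℝ := fun θ => lobachevsky θ + lobachevsky (s - θ) with hφ
  have hd : ∀ θ ∈ Set.Ioo (0:ℝ) s,
      HasDerivAt φ (Real.log (2 * Real.sin (s - θ)) - Real.log (2 * Real.sin θ)) θ := by
    intro θ hθ
    have h1 := hasDerivAt_lobachevsky hθ.1 (hθ.2.trans hs)
    have hin : HasDerivAt (fun θ : ℝ => s - θ) (-1) θ := by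
      simpa using (hasDerivAt_id θ).const_sub s
    have h2 := (hasDerivAt_lobachevsky (x := s - θ) (by simp [hθ.2])
      (by have := hθ.1; linarith)).comp θ hin
    have := h1.add h2
    exact this.congr_deriv (by ring)
  have hmono : StrictMonoOn φ (Set.Icc a (s/2)) := by
    apply strictMonoOn_of_deriv_pos (convex_Icc a (s/2))
    · intro θ hθ
      exact ((hd θ ⟨lt_of_lt_of_le ha hθ.1, lt_of_le_of_lt hθ.2 (by linarith)⟩).continuousAt).continuousWithinAt
    · intro θ hθ
      rw [interior_Icc] at hθ
      have hθ0 : 0 < θ := ha.trans hθ.1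
      have hθs : θ < s := hθ.2.trans (by linarith)
      rw [(hd θ ⟨hθ0, hθs⟩).deriv]
      have hlt : Real.sin θ < Real.sin (s - θ) := by
        have h1 : θ < s - θ := by linarith [hθ.2]
        by_cases hc : s - θ ≤ π/2
        · exact Real.strictMonoOn_sin ⟨by linarith [pi_pos], by linarith⟩
            ⟨by linarith [pi_pos], hc⟩ h1
        · push_neg at hc
          rw [← Real.sin_pi_sub (s - θ)]
          apply Real.strictMonoOn_sin ⟨by linarith [pi_pos], by linarith⟩
            ⟨by linarith [pi_pos], by linarith⟩ (by linarith)
      have hsinθ : 0 < Real.sin θ := Real.sin_pos_of_pos_of_lt_pi hθ0 (hθs.trans hs)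
      have := Real.log_lt_log (by linarith) (show 2 * Real.sin θ < 2 * Real.sin (s - θ) by linarith)
      linarith
  have hkey := hmono ⟨le_rfl, by linarith⟩ ⟨by linarith, le_rfl⟩ (by linarith : a < s/2)
  have e1 : φ a = lobachevsky a + lobachevsky b := by
    simp only [hφ]
    congr 1
    congr 1
    rw [hsdef]; ring
  have e2 : φ (s/2) = 2 * lobachevsky (s/2) := by
    simp only [hφ]
    have : s - s/2 = s/2 := by ring
    rw [this]; ring
  rw [e1, e2] at hkey
  exact hkey

/-- The symmetric one-parameter family is strictly maximized at `π/3`. -/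
lemma sym_lt {t : ℝ} (ht : 0 < t) (ht2 : t < π/2) (hne : t ≠ π/3) :
    2 * lobachevsky t + lobachevsky (π - 2*t) <
      2 * lobachevsky (π/3) + lobachevsky (π - 2*(π/3)) := by
  set h : ℝ → ℝ := fun t => 2 * lobachevsky t + lobachevsky (π - 2*t) with hh
  have hd : ∀ θ ∈ Set.Ioo (0:ℝ) (π/2),
      HasDerivAt h (2 * Real.log (2 * Real.cos θ)) θ := by
    intro θ hθ
    have hθπ : θ < π := hθ.2.trans (by linarith [pi_pos])
    have h1 := (hasDerivAt_lobachevsky hθ.1 hθπ).const_mul 2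
    have hin : HasDerivAt (fun θ : ℝ => π - 2*θ) (-2) θ := by
      simpa using ((hasDerivAt_id θ).const_mul 2).const_sub π
    have h2 := (hasDerivAt_lobachevsky (x := π - 2*θ) (by linarith [hθ.2])
      (by linarith [hθ.1])).comp θ hin
    have hcos : 0 < Real.cos θ := Real.cos_pos_of_mem_Ioo ⟨by linarith [hθ.1, pi_pos], hθ.2⟩
    have hsin : 0 < Real.sin θ := Real.sin_pos_of_pos_of_lt_pi hθ.1 hθπ
    have hlogid : Real.log (2 * Real.sin (π - 2*θ)) =
        Real.log (2 * Real.sin θ) + Real.log (2 * Real.cos θ) := by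
      rw [← Real.log_mul (by positivity) (by positivity)]
      congr 1
      rw [Real.sin_pi_sub, Real.sin_two_mul]
      ring
    have hD := h1.add h2
    have heq2 : 2 * Real.log (2 * Real.cos θ) =
        2 * -Real.log (2 * Real.sin θ) + -Real.log (2 * Real.sin (π - 2*θ)) * -2 := by
      rw [hlogid]; ring
    rw [heq2]
    exact hD
  have hcont : ∀ θ ∈ Set.Icc (min t (π/3)) (max t (π/3)), ContinuousWithinAt h (Set.Icc (min t (π/3)) (max t (π/3))) θ := by
    intro θ hθ
    have h0 : 0 < θ := lt_of_lt_of_le (lt_min ht (by positivity)) hθ.1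
    have h2 : θ < π/2 := lt_of_le_of_lt hθ.2 (max_lt ht2 (by linarith [pi_pos]))
    exact ((hd θ ⟨h0, h2⟩).continuousAt).continuousWithinAt
  rcases lt_or_gt_of_ne hne with hlt | hgt
  · -- t < π/3 : strictly monotone on [t, π/3]
    have hmono : StrictMonoOn h (Set.Icc t (π/3)) := by
      apply strictMonoOn_of_deriv_pos (convex_Icc _ _)
      · intro θ hθ
        have := hcont θ (by rw [min_eq_left hlt.le, max_eq_right hlt.le]; exact hθ)
        rwa [min_eq_left hlt.le, max_eq_right hlt.le] at this
      · intro θ hθ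
        rw [interior_Icc] at hθ
        have h0 : 0 < θ := ht.trans hθ.1
        have h2 : θ < π/2 := hθ.2.trans (by linarith [pi_pos])
        rw [(hd θ ⟨h0, h2⟩).deriv]
        have hcos : Real.cos (π/3) < Real.cos θ := by
          apply Real.strictAntiOn_cos ⟨h0.le, by linarith [pi_pos]⟩
            ⟨by positivity, by linarith [pi_pos]⟩ hθ.2
        rw [Real.cos_pi_div_three] at hcos
        have : (1:ℝ) < 2 * Real.cos θ := by linarith
        have := Real.log_pos this
        linarith
    exact hmono ⟨le_rfl, hlt.le⟩ ⟨hlt.le, le_rfl⟩ hlt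
  · -- t > π/3 : strictly antitone on [π/3, t]
    have hmono : StrictAntiOn h (Set.Icc (π/3) t) := by
      apply strictAntiOn_of_deriv_neg (convex_Icc _ _)
      · intro θ hθ
        have := hcont θ (by rw [min_eq_right hgt.le, max_eq_left hgt.le]; exact hθ)
        rwa [min_eq_right hgt.le, max_eq_left hgt.le] at this
      · intro θ hθ
        rw [interior_Icc] at hθ
        have h0 : 0 < θ := lt_trans (by positivity) hθ.1
        have h2 : θ < π/2 := hθ.2.trans ht2
        rw [(hd θ ⟨h0, h2⟩).deriv]
        have hcos : Real.cos θ < Real.cos (π/3) := by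
          apply Real.strictAntiOn_cos ⟨by positivity, by linarith [pi_pos]⟩
            ⟨h0.le, by linarith [pi_pos]⟩ hθ.1
        rw [Real.cos_pi_div_three] at hcos
        have hcospos : 0 < Real.cos θ := Real.cos_pos_of_mem_Ioo ⟨by linarith [pi_pos], h2⟩
        have h1 : 2 * Real.cos θ < 1 := by linarith
        have := Real.log_neg (by linarith) h1
        linarith
    exact hmono ⟨le_rfl, hgt.le⟩ ⟨hgt.le, le_rfl⟩ hgt

lemma sym_le {t : ℝ} (ht : 0 < t) (ht2 : t < π/2) :
    2 * lobachevsky t + lobachevsky (π - 2*t) ≤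
      2 * lobachevsky (π/3) + lobachevsky (π - 2*(π/3)) := by
  rcases eq_or_ne t (π/3) with h | h
  · rw [h]
  · exact (sym_lt ht ht2 h).le

theorem stmt_19 :
    (π / 3, π / 3) ∈ angleTriangle ∧
    ∀ p ∈ angleTriangle, p ≠ (π / 3, π / 3) → idealVol p < idealVol (π / 3, π / 3) := by
  have hπ := pi_pos
  constructor
  · exact ⟨by positivity, by positivity, by linarith⟩
  · rintro ⟨α, β⟩ ⟨hα, hβ, hs⟩ hne
    simp only at hα hβ hs
    have hvolC : idealVol (π/3, π/3) = 2 * lobachevsky (π/3) + lobachevsky (π - 2*(π/3)) := by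
      simp only [idealVol]
      have : π - π/3 - π/3 = π - 2*(π/3) := by ring
      rw [this]; ring
    rw [hvolC]
    have hargeq : π - α - β = π - 2*((α+β)/2) := by ring
    rcases eq_or_ne α β with heq | hneq
    · subst heq
      have hαne : α ≠ π/3 := fun h => hne (by rw [h])
      have h2 : α < π/2 := by linarith
      have := sym_lt hα h2 hαne
      simp only [idealVol]
      have h3 : π - α - α = π - 2*α := by ring
      rw [h3]
      linarith
    · have hm0 : 0 < (α+β)/2 := by linarith
      have hm2 : (α+β)/2 < π/2 := by linarith
      have hle := sym_le hm0 hm2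
      rcases lt_or_gt_of_ne hneq with hab | hab
      · have hbal := balance_lt hα hab hs
        simp only [idealVol]
        rw [hargeq]
        linarith
      · have hbal := balance_lt hβ hab (by linarith)
        have : (β + α)/2 = (α+β)/2 := by ring
        rw [this] at hbal
        simp only [idealVol]
        rw [hargeq]
        linarith
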